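/- Linear stability criterion for stochastic SAM: with the linearized stochastic SAM dynamics x_{t+1} = (I − ηH_{ξ_t} − ηρH_{ξ_t}²)x_t where H_{ξ_t} are i.i.d. random symmetric matrices with mean H and moments M_k = E[H_ξ^k], if λ_max((I − ηH − ηρH²)² + η(η−2ρ)(M_2 − H²) + 2η²ρ(M_3 − H³) + η²ρ²(M_4 − H⁴)) ≤ 1, then E[‖x_t‖²] ≤ ‖x_0‖² for all t ≥ 0 (so x★ = 0 is linearly stable). -/

import Mathlib

open scoped BigOperators
open Matrix

/-- Trajectory of a random iteration driven by an i.i.d. sequence of outcomes. -/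
def randTraj {Ω X : Type*} (step : Ω → X → X) (x0 : X) :
    (t : ℕ) → (Fin t → Ω) → X
  | 0, _ => x0
  | t + 1, ω => step (ω (Fin.last t)) (randTraj step x0 t (fun j => ω j.castSucc))

/-- Expansion of the squared SAM step matrix as a polynomial in `B`. -/
lemma sam_sq_expand {n : ℕ} (η ρ : ℝ) (B : Matrix (Fin n) (Fin n) ℝ) :
    ((1 : Matrix (Fin n) (Fin n) ℝ) - η • B - (η * ρ) • B ^ 2) ^ 2
      = 1 - (2 * η) • B + (η * (η - 2 * ρ)) • B ^ 2
        + (2 * η ^ 2 * ρ) • B ^ 3 + (η ^ 2 * ρ ^ 2) • B ^ 4 := by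
  have hp : ((1 : Polynomial ℝ) - Polynomial.C η * Polynomial.X
        - Polynomial.C (η * ρ) * Polynomial.X ^ 2) ^ 2
      = 1 - Polynomial.C (2 * η) * Polynomial.X
        + Polynomial.C (η * (η - 2 * ρ)) * Polynomial.X ^ 2
        + Polynomial.C (2 * η ^ 2 * ρ) * Polynomial.X ^ 3
        + Polynomial.C (η ^ 2 * ρ ^ 2) * Polynomial.X ^ 4 := by
    ring_nf
    simp only [_root_.map_mul, map_add, map_neg, map_pow, map_ofNat]
    ring
  have := congrArg (Polynomial.aeval B) hp
  simpa [map_sub, map_add, _root_.map_mul, map_pow, Polynomial.aeval_X, Polynomial.aeval_C,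
    Algebra.smul_def] using this

theorem sam_linear_stability
    {d m : ℕ} (hm : 0 < m) (η ρ : ℝ) (hη : 0 < η) (hρ : 0 ≤ ρ)
    (Hs : Fin m → Matrix (Fin d) (Fin d) ℝ)
    (hsym : ∀ j, (Hs j).IsSymm)
    (H : Matrix (Fin d) (Fin d) ℝ)
    (hmean : H = (m : ℝ)⁻¹ • ∑ j, Hs j)
    (hstab : ∀ v : Fin d → ℝ,
      v ⬝ᵥ ((((1 : Matrix (Fin d) (Fin d) ℝ) - η • H - (η * ρ) • H ^ 2) ^ 2
          + (η * (η - 2 * ρ)) • ((m : ℝ)⁻¹ • ∑ j, (Hs j) ^ 2 - H ^ 2)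
          + (2 * η ^ 2 * ρ) • ((m : ℝ)⁻¹ • ∑ j, (Hs j) ^ 3 - H ^ 3)
          + (η ^ 2 * ρ ^ 2) • ((m : ℝ)⁻¹ • ∑ j, (Hs j) ^ 4 - H ^ 4)).mulVec v)
        ≤ v ⬝ᵥ v)
    (x0 : Fin d → ℝ) :
    ∀ t : ℕ,
      ((m : ℝ) ^ t)⁻¹ *
          ∑ ω : Fin t → Fin m,
            (randTraj (fun j x =>
                (((1 : Matrix (Fin d) (Fin d) ℝ) - η • Hs j - (η * ρ) • (Hs j) ^ 2)).mulVec x)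
              x0 t ω) ⬝ᵥ
            (randTraj (fun j x =>
                (((1 : Matrix (Fin d) (Fin d) ℝ) - η • Hs j - (η * ρ) • (Hs j) ^ 2)).mulVec x)
              x0 t ω)
        ≤ x0 ⬝ᵥ x0 := by
  set A : Fin m → Matrix (Fin d) (Fin d) ℝ :=
    fun j => (1 : Matrix (Fin d) (Fin d) ℝ) - η • Hs j - (η * ρ) • (Hs j) ^ 2 with hA
  have hmR : (0 : ℝ) < (m : ℝ) := by exact_mod_cast hm
  -- The stability matrix equals the average of `(A j)^2`.
  have hBig :
      (((1 : Matrix (Fin d) (Fin d) ℝ) - η • H - (η * ρ) • H ^ 2) ^ 2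
          + (η * (η - 2 * ρ)) • ((m : ℝ)⁻¹ • ∑ j, (Hs j) ^ 2 - H ^ 2)
          + (2 * η ^ 2 * ρ) • ((m : ℝ)⁻¹ • ∑ j, (Hs j) ^ 3 - H ^ 3)
          + (η ^ 2 * ρ ^ 2) • ((m : ℝ)⁻¹ • ∑ j, (Hs j) ^ 4 - H ^ 4))
        = (m : ℝ)⁻¹ • ∑ j, (A j) ^ 2 := by
    have hsum : ∑ j, (A j) ^ 2
        = ∑ j, ((1 : Matrix (Fin d) (Fin d) ℝ) - (2 * η) • Hs j
            + (η * (η - 2 * ρ)) • (Hs j) ^ 2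
            + (2 * η ^ 2 * ρ) • (Hs j) ^ 3 + (η ^ 2 * ρ ^ 2) • (Hs j) ^ 4) := by
      refine Finset.sum_congr rfl fun j _ => ?_
      exact sam_sq_expand η ρ (Hs j)
    have hm0 : (m : ℝ) ≠ 0 := hmR.ne'
    have h1 : ∑ j, Hs j = (m : ℝ) • H := by
      rw [hmean, smul_smul, mul_inv_cancel₀ hm0, one_smul]
    rw [sam_sq_expand η ρ H, hsum]
    simp only [Finset.sum_add_distrib, Finset.sum_sub_distrib, ← Finset.smul_sum,
      Finset.sum_const, Finset.card_univ, Fintype.card_fin, h1]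
    match_scalars <;> field_simp <;> ring
  -- `A j` is symmetric.
  have hAsym : ∀ j, (A j).IsSymm := by
    intro j
    have h1 : ((Hs j) ^ 2).IsSymm := (hsym j).pow 2
    simp only [Matrix.IsSymm, hA, Matrix.transpose_sub, Matrix.transpose_smul,
      Matrix.transpose_one, (hsym j).eq, h1.eq]
  -- key one-step inequality
  have hstep : ∀ x : Fin d → ℝ,
      ∑ j, ((A j).mulVec x ⬝ᵥ (A j).mulVec x) ≤ (m : ℝ) * (x ⬝ᵥ x) := by
    intro x
    have h := hstab x
    rw [hBig] at h
    have hdot : ∀ j : Fin m, x ⬝ᵥ ((A j) ^ 2).mulVec x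
        = (A j).mulVec x ⬝ᵥ (A j).mulVec x := by
      intro j
      rw [sq, ← Matrix.mulVec_mulVec, Matrix.dotProduct_mulVec x (A j),
        ← Matrix.mulVec_transpose, (hAsym j).eq]
    rw [Matrix.smul_mulVec, dotProduct_smul, smul_eq_mul] at h
    have hsm : (∑ j, (A j) ^ 2).mulVec x = ∑ j, ((A j) ^ 2).mulVec x := by
      ext i
      simp only [Matrix.mulVec, dotProduct, Finset.sum_apply, Matrix.sum_apply,
        Finset.sum_mul]
      rw [Finset.sum_comm]
    have h2 : x ⬝ᵥ (∑ j, (A j) ^ 2).mulVec x = ∑ j, (A j).mulVec x ⬝ᵥ (A j).mulVec x := by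
      rw [hsm]
      have : x ⬝ᵥ (∑ j, ((A j) ^ 2).mulVec x) = ∑ j, x ⬝ᵥ ((A j) ^ 2).mulVec x := by
        simp only [dotProduct, Finset.sum_apply, Finset.mul_sum]
        rw [Finset.sum_comm]
      rw [this]
      exact Finset.sum_congr rfl fun j _ => hdot j
    rw [h2] at h
    calc ∑ j, (A j).mulVec x ⬝ᵥ (A j).mulVec x
        = (m : ℝ) * ((m : ℝ)⁻¹ * ∑ j, (A j).mulVec x ⬝ᵥ (A j).mulVec x) := by
          rw [← mul_assoc, mul_inv_cancel₀ hmR.ne', one_mul]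
      _ ≤ (m : ℝ) * (x ⬝ᵥ x) := by
          exact mul_le_mul_of_nonneg_left h hmR.le
  intro t
  induction t with
  | zero => simp [randTraj]
  | succ t ih =>
    set step : Fin m → (Fin d → ℝ) → (Fin d → ℝ) := fun j x => (A j).mulVec x with hstepdef
    have hsplit : ∑ ω : Fin (t + 1) → Fin m,
          (randTraj step x0 (t + 1) ω) ⬝ᵥ (randTraj step x0 (t + 1) ω)
        = ∑ p : Fin m × (Fin t → Fin m),
            (step p.1 (randTraj step x0 t p.2)) ⬝ᵥ (step p.1 (randTraj step x0 t p.2)) := by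
      rw [← Fintype.sum_equiv (Fin.snocEquiv (fun _ => Fin m))
        _ (fun ω => (randTraj step x0 (t + 1) ω) ⬝ᵥ (randTraj step x0 (t + 1) ω))]
      intro p
      simp only [Fin.snocEquiv, Equiv.coe_fn_mk, randTraj]
      congr 2 <;>
        simp [Fin.snoc_last, Fin.snoc_castSucc]
    have hbound : ∑ ω : Fin (t + 1) → Fin m,
          (randTraj step x0 (t + 1) ω) ⬝ᵥ (randTraj step x0 (t + 1) ω)
        ≤ (m : ℝ) * ∑ ω : Fin t → Fin m,
            (randTraj step x0 t ω) ⬝ᵥ (randTraj step x0 t ω) := by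
      rw [hsplit, Fintype.sum_prod_type_right, Finset.mul_sum]
      refine Finset.sum_le_sum fun ω _ => ?_
      exact hstep (randTraj step x0 t ω)
    have hpos : (0 : ℝ) < (m : ℝ) ^ (t + 1) := by positivity
    calc ((m : ℝ) ^ (t + 1))⁻¹ *
          ∑ ω : Fin (t + 1) → Fin m,
            (randTraj step x0 (t + 1) ω) ⬝ᵥ (randTraj step x0 (t + 1) ω)
        ≤ ((m : ℝ) ^ (t + 1))⁻¹ * ((m : ℝ) * ∑ ω : Fin t → Fin m,
            (randTraj step x0 t ω) ⬝ᵥ (randTraj step x0 t ω)) :=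
          mul_le_mul_of_nonneg_left hbound (inv_nonneg.2 hpos.le)
      _ = ((m : ℝ) ^ t)⁻¹ * ∑ ω : Fin t → Fin m,
            (randTraj step x0 t ω) ⬝ᵥ (randTraj step x0 t ω) := by
          rw [pow_succ, mul_inv, ← mul_assoc, mul_assoc ((m:ℝ)^t)⁻¹,
            inv_mul_cancel₀ hmR.ne', mul_one]
      _ ≤ x0 ⬝ᵥ x0 := ih
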